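/- Let 1 < p ≤ 2, t > 0, s > 0, and suppose there exists C ≥ 0 such that for every f ∈ L^p(ℂⁿ, dv_s) the function w ↦ e^{t⟨z,w⟩} f(w) is dv_t-integrable for a.e. z ∈ ℂⁿ and ∫_{ℂⁿ} |S_t f|^p dv_s ≤ C^p ∫_{ℂⁿ} |f|^p dv_s, where S_t f(z) = ∫_{ℂⁿ} e^{t⟨z,w⟩} f(w) dv_t(w). Then p·t = 2s. -/

import Mathlib

open MeasureTheory

/-- `|z|² = |z₁|² + ⋯ + |zₙ|²` on `ℂⁿ`. -/
noncomputable def nsq {n : ℕ} (z : Fin n → ℂ) : ℝ := ∑ i, Complex.normSq (z i)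

/-- `⟨z,w⟩ = z₁·conj w₁ + ⋯ + zₙ·conj wₙ` on `ℂⁿ`. -/
noncomputable def herm {n : ℕ} (z w : Fin n → ℂ) : ℂ := ∑ i, z i * (starRingEnd ℂ) (w i)

/-- The Gaussian probability measure `dv_t(z) = (t/π)^n e^{-t|z|²} dv(z)` on `ℂⁿ`. -/
noncomputable def gaussMeasure (n : ℕ) (t : ℝ) : Measure (Fin n → ℂ) :=
  volume.withDensity fun z => ENNReal.ofReal ((t / Real.pi) ^ n * Real.exp (-t * nsq z))

/-- Boundedness of the operator `S_t f(z) = ∫ e^{t⟨z,w⟩} f(w) dv_t(w)` on `L^p(ℂⁿ, dv_s)`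
with constant `C`: for every `f ∈ L^p(dv_s)` the integrand is `dv_t`-integrable for a.e. `z`
and `∫ |S_t f|^p dv_s ≤ C^p ∫ |f|^p dv_s`. -/
def SBounded (n : ℕ) (t s p C : ℝ) : Prop :=
  ∀ f : (Fin n → ℂ) → ℂ, MemLp f (ENNReal.ofReal p) (gaussMeasure n s) →
    (∀ᵐ z ∂(volume : Measure (Fin n → ℂ)),
      Integrable (fun w => Complex.exp ((t : ℂ) * herm z w) * f w) (gaussMeasure n t)) ∧
    ∫⁻ z, ENNReal.ofReal
        (‖∫ w, Complex.exp ((t : ℂ) * herm z w) * f w ∂(gaussMeasure n t)‖ ^ p)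
      ∂(gaussMeasure n s)
      ≤ ENNReal.ofReal (C ^ p) *
        ∫⁻ z, ENNReal.ofReal (‖f z‖ ^ p) ∂(gaussMeasure n s)

open Complex
open scoped ENNReal NNReal

lemma gauss1_eq {m : ℝ} (α β : ℂ) (w : ℂ) :
    α * (starRingEnd ℂ) w + β * w - (m : ℂ) * (Complex.normSq w : ℝ) =
      (-(m:ℂ) * (w.re:ℝ) ^ 2 + (α + β) * (w.re:ℝ) + 0)
        + (-(m:ℂ) * (w.im:ℝ) ^ 2 + ((β - α) * Complex.I) * (w.im:ℝ) + 0) := by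
  simp [Complex.ext_iff, Complex.normSq_apply, ← Complex.ofReal_pow]
  constructor <;> ring

lemma neg_m_re {m : ℝ} (hm : 0 < m) : (-(m:ℂ)).re < 0 := by
  simpa using hm

lemma gauss1_comp {m : ℝ} (α β : ℂ) (p : ℝ × ℝ) :
    Complex.exp (α * (starRingEnd ℂ) (Complex.measurableEquivRealProd.symm p)
        + β * (Complex.measurableEquivRealProd.symm p)
        - (m : ℂ) * (Complex.normSq (Complex.measurableEquivRealProd.symm p) : ℝ))
      = Complex.exp (-(m:ℂ) * (p.1:ℝ) ^ 2 + (α + β) * (p.1:ℝ) + 0) *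
        Complex.exp (-(m:ℂ) * (p.2:ℝ) ^ 2 + ((β - α) * Complex.I) * (p.2:ℝ) + 0) := by
  rw [← Complex.exp_add, gauss1_eq α β (Complex.measurableEquivRealProd.symm p)]
  simp [Complex.measurableEquivRealProd_symm_apply]

lemma gauss1_integrable {m : ℝ} (hm : 0 < m) (α β : ℂ) :
    Integrable (fun w : ℂ =>
      Complex.exp (α * (starRingEnd ℂ) w + β * w - (m : ℂ) * (Complex.normSq w : ℝ))) := by
  rw [← (Complex.volume_preserving_equiv_real_prod.symm).integrable_comp_emb
    (Complex.measurableEquivRealProd.symm.measurableEmbedding)]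
  have : (fun w : ℂ =>
      Complex.exp (α * (starRingEnd ℂ) w + β * w - (m : ℂ) * (Complex.normSq w : ℝ)))
      ∘ Complex.measurableEquivRealProd.symm
      = fun p : ℝ × ℝ =>
        Complex.exp (-(m:ℂ) * (p.1:ℝ) ^ 2 + (α + β) * (p.1:ℝ) + 0) *
        Complex.exp (-(m:ℂ) * (p.2:ℝ) ^ 2 + ((β - α) * Complex.I) * (p.2:ℝ) + 0) := by
    funext p
    exact gauss1_comp α β p
  rw [this, MeasureTheory.Measure.volume_eq_prod ℝ ℝ]
  exact (integrable_cexp_quadratic' (neg_m_re hm) _ _).mul_prod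
    (integrable_cexp_quadratic' (neg_m_re hm) _ _)

lemma gauss1_integral {m : ℝ} (hm : 0 < m) (α β : ℂ) :
    ∫ w : ℂ,
      Complex.exp (α * (starRingEnd ℂ) w + β * w - (m : ℂ) * (Complex.normSq w : ℝ))
      = ((Real.pi : ℂ) / m) * Complex.exp (α * β / m) := by
  rw [← (Complex.volume_preserving_equiv_real_prod.symm).integral_comp
    (Complex.measurableEquivRealProd.symm.measurableEmbedding)]
  simp_rw [gauss1_comp α β]
  rw [MeasureTheory.Measure.volume_eq_prod ℝ ℝ,
    integral_prod_mul (fun u : ℝ => Complex.exp (-(m:ℂ) * (u:ℝ) ^ 2 + (α + β) * (u:ℝ) + 0))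
      (fun v : ℝ => Complex.exp (-(m:ℂ) * (v:ℝ) ^ 2 + ((β - α) * Complex.I) * (v:ℝ) + 0))]
  rw [integral_cexp_quadratic (neg_m_re hm), integral_cexp_quadratic (neg_m_re hm), neg_neg]
  have hπm : ((Real.pi : ℂ) / m) ≠ 0 := by
    apply div_ne_zero
    · exact Complex.ofReal_ne_zero.mpr Real.pi_ne_zero
    · exact Complex.ofReal_ne_zero.mpr (ne_of_gt hm)
  have hm' : (m : ℂ) ≠ 0 := Complex.ofReal_ne_zero.mpr (ne_of_gt hm)
  have h12 : ((Real.pi : ℂ) / m) ^ (1/2 : ℂ) * ((Real.pi : ℂ) / m) ^ (1/2 : ℂ)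
      = ((Real.pi : ℂ) / m) := by
    rw [← Complex.cpow_add _ _ hπm]
    norm_num
  have hexp : Complex.exp (0 - (α + β) ^ 2 / (4 * -(m:ℂ))) *
      Complex.exp (0 - ((β - α) * Complex.I) ^ 2 / (4 * -(m:ℂ)))
      = Complex.exp (α * β / m) := by
    rw [← Complex.exp_add]
    congr 1
    rw [show ((β - α) * Complex.I) ^ 2 = -(β - α)^2 by
      rw [mul_pow, Complex.I_sq]; ring]
    field_simp
    ring
  calc ((Real.pi:ℂ) / m) ^ (1/2 : ℂ) * Complex.exp (0 - (α + β) ^ 2 / (4 * -(m:ℂ))) *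
        (((Real.pi:ℂ) / m) ^ (1/2 : ℂ) *
          Complex.exp (0 - ((β - α) * Complex.I) ^ 2 / (4 * -(m:ℂ))))
      = (((Real.pi:ℂ) / m) ^ (1/2 : ℂ) * ((Real.pi:ℂ) / m) ^ (1/2 : ℂ)) *
        (Complex.exp (0 - (α + β) ^ 2 / (4 * -(m:ℂ))) *
          Complex.exp (0 - ((β - α) * Complex.I) ^ 2 / (4 * -(m:ℂ)))) := by ring
    _ = ((Real.pi : ℂ) / m) * Complex.exp (α * β / m) := by rw [h12, hexp]

lemma gaussn_eq {n : ℕ} {m : ℝ} (A B : Fin n → ℂ) (w : Fin n → ℂ) :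
    Complex.exp (∑ i, (A i * (starRingEnd ℂ) (w i) + B i * w i) - (m : ℂ) * (nsq w : ℝ))
      = ∏ i, Complex.exp
          (A i * (starRingEnd ℂ) (w i) + B i * w i - (m : ℂ) * (Complex.normSq (w i) : ℝ)) := by
  rw [← Complex.exp_sum]
  congr 1
  rw [nsq]
  push_cast
  rw [Finset.mul_sum, ← Finset.sum_sub_distrib]

lemma gaussn_integrable {n : ℕ} {m : ℝ} (hm : 0 < m) (A B : Fin n → ℂ) :
    Integrable (fun w : Fin n → ℂ =>
      Complex.exp (∑ i, (A i * (starRingEnd ℂ) (w i) + B i * w i) - (m : ℂ) * (nsq w : ℝ))) := by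
  simp_rw [gaussn_eq A B]
  exact Integrable.fintype_prod (fun i => gauss1_integrable hm (A i) (B i))

lemma gaussn_integral {n : ℕ} {m : ℝ} (hm : 0 < m) (A B : Fin n → ℂ) :
    ∫ w : Fin n → ℂ,
      Complex.exp (∑ i, (A i * (starRingEnd ℂ) (w i) + B i * w i) - (m : ℂ) * (nsq w : ℝ))
      = ((Real.pi : ℂ) / m) ^ n * Complex.exp ((∑ i, A i * B i) / m) := by
  simp_rw [gaussn_eq A B]
  rw [MeasureTheory.volume_pi, integral_fintype_prod_eq_prod (ι := Fin n)
    (f := fun i (w : ℂ) => Complex.exp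
      (A i * (starRingEnd ℂ) w + B i * w - (m : ℂ) * (Complex.normSq w : ℝ)))]
  simp_rw [gauss1_integral hm]
  rw [Finset.prod_mul_distrib, Finset.prod_const, ← Complex.exp_sum, Finset.card_univ,
    Fintype.card_fin, ← Finset.sum_div]

lemma gaussR_exponent {n : ℕ} (m r : ℝ) (a : Fin n → ℂ) (w : Fin n → ℂ) :
    ((r * (herm w a).re - m * nsq w : ℝ) : ℂ)
      = ∑ i, (((r/2 : ℝ) : ℂ) * a i * (starRingEnd ℂ) (w i)
          + ((r/2 : ℝ) : ℂ) * (starRingEnd ℂ) (a i) * w i) - (m : ℂ) * (nsq w : ℝ) := by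
  push_cast
  congr 1
  rw [herm, Complex.re_sum]
  push_cast
  rw [Finset.mul_sum]
  congr 1
  funext i
  have h2 : ((((w i) * (starRingEnd ℂ) (a i)).re : ℝ) : ℂ)
      = ((w i) * (starRingEnd ℂ) (a i) + (starRingEnd ℂ) ((w i) * (starRingEnd ℂ) (a i))) / 2 := by
    rw [Complex.add_conj]
    push_cast
    ring
  calc ((r : ℂ)) * (((w i) * (starRingEnd ℂ) (a i)).re : ℝ)
      = (r : ℂ) * (((w i) * (starRingEnd ℂ) (a i)
          + (starRingEnd ℂ) ((w i) * (starRingEnd ℂ) (a i))) / 2) := by rw [h2]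
    _ = (r : ℂ)/2 * a i * (starRingEnd ℂ) (w i)
          + (r : ℂ)/2 * (starRingEnd ℂ) (a i) * w i := by
        simp only [map_mul, Complex.conj_conj]
        ring

lemma gaussR_integrable {n : ℕ} {m : ℝ} (hm : 0 < m) (r : ℝ) (a : Fin n → ℂ) :
    Integrable (fun w : Fin n → ℂ => Real.exp (r * (herm w a).re - m * nsq w)) := by
  have h := (gaussn_integrable (n := n) hm (fun i => ((r/2 : ℝ) : ℂ) * a i)
    (fun i => ((r/2 : ℝ) : ℂ) * (starRingEnd ℂ) (a i))).norm
  simp_rw [← gaussR_exponent m r a] at h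
  apply h.congr
  filter_upwards with w
  rw [Complex.norm_exp, Complex.ofReal_re]

lemma gaussR_integral {n : ℕ} {m : ℝ} (hm : 0 < m) (r : ℝ) (a : Fin n → ℂ) :
    ∫ w : Fin n → ℂ, Real.exp (r * (herm w a).re - m * nsq w)
      = (Real.pi / m) ^ n * Real.exp (r ^ 2 * nsq a / (4 * m)) := by
  have hsum : (∑ i, ((r/2 : ℝ) : ℂ) * a i * (((r/2 : ℝ) : ℂ) * (starRingEnd ℂ) (a i)))
      = ((r ^ 2 / 4 * nsq a : ℝ) : ℂ) := by
    rw [nsq]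
    push_cast
    rw [Finset.mul_sum]
    congr 1
    funext i
    rw [show (((r:ℂ))/2 * a i * ((r:ℂ)/2 * (starRingEnd ℂ) (a i)))
        = (r:ℂ)^2/4 * (a i * (starRingEnd ℂ) (a i)) by ring, Complex.mul_conj]
  have key : ∫ w : Fin n → ℂ, ((Real.exp (r * (herm w a).re - m * nsq w) : ℝ) : ℂ)
      = (((Real.pi / m) ^ n * Real.exp (r ^ 2 * nsq a / (4 * m)) : ℝ) : ℂ) := by
    calc ∫ w : Fin n → ℂ, ((Real.exp (r * (herm w a).re - m * nsq w) : ℝ) : ℂ)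
        = ∫ w : Fin n → ℂ, Complex.exp
            (∑ i, (((r/2 : ℝ) : ℂ) * a i * (starRingEnd ℂ) (w i)
              + ((r/2 : ℝ) : ℂ) * (starRingEnd ℂ) (a i) * w i) - (m : ℂ) * (nsq w : ℝ)) := by
          congr 1
          funext w
          rw [Complex.ofReal_exp, gaussR_exponent m r a w]
      _ = ((Real.pi : ℂ) / m) ^ n
            * Complex.exp ((∑ i, ((r/2 : ℝ) : ℂ) * a i * (((r/2 : ℝ) : ℂ) * (starRingEnd ℂ) (a i))) / m) := by
          rw [gaussn_integral hm]
      _ = (((Real.pi / m) ^ n * Real.exp (r ^ 2 * nsq a / (4 * m)) : ℝ) : ℂ) := by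
          rw [hsum,
            show ((r ^ 2 / 4 * nsq a : ℝ) : ℂ) / (m : ℂ)
              = ((r ^ 2 * nsq a / (4 * m) : ℝ) : ℂ) by push_cast; ring,
            ← Complex.ofReal_exp]
          push_cast
          ring
  have h2 := integral_ofReal (𝕜 := ℂ)
    (f := fun w : Fin n → ℂ => Real.exp (r * (herm w a).re - m * nsq w))
    (μ := (volume : Measure (Fin n → ℂ)))
  exact Complex.ofReal_injective (h2.symm.trans key)

lemma continuous_nsq {n : ℕ} : Continuous (nsq (n := n)) := by
  unfold nsq
  exact continuous_finset_sum _ fun i _ => Complex.continuous_normSq.comp (continuous_apply i)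

lemma continuous_herm_fst {n : ℕ} (a : Fin n → ℂ) : Continuous fun z : Fin n → ℂ => herm z a := by
  unfold herm
  exact continuous_finset_sum _ fun i _ => (continuous_apply i).mul continuous_const

lemma gaussDens_nonneg {n : ℕ} {τ : ℝ} (hτ : 0 < τ) (z : Fin n → ℂ) :
    0 ≤ (τ / Real.pi) ^ n * Real.exp (-τ * nsq z) := by
  have := Real.pi_pos
  positivity

lemma gaussDens_measurable {n : ℕ} (τ : ℝ) :
    Measurable fun z : Fin n → ℂ => (τ / Real.pi) ^ n * Real.exp (-τ * nsq z) :=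
  (measurable_const.mul ((Real.continuous_exp.measurable).comp
    ((continuous_nsq.measurable).const_mul (-τ))))

lemma gauss_integral_eq {n : ℕ} {τ : ℝ} (hτ : 0 < τ) (F : (Fin n → ℂ) → ℂ) :
    ∫ w, F w ∂gaussMeasure n τ
      = ∫ w, ((τ / Real.pi) ^ n * Real.exp (-τ * nsq w)) • F w := by
  rw [gaussMeasure]
  rw [show (fun z : Fin n → ℂ => ENNReal.ofReal ((τ / Real.pi) ^ n * Real.exp (-τ * nsq z)))
      = fun z : Fin n → ℂ =>
        ((((τ / Real.pi) ^ n * Real.exp (-τ * nsq z)).toNNReal : ℝ≥0) : ℝ≥0∞) from rfl]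
  rw [integral_withDensity_eq_integral_smul ((gaussDens_measurable τ).real_toNNReal) F]
  congr 1
  funext w
  rw [NNReal.smul_def, Real.coe_toNNReal _ (gaussDens_nonneg hτ w)]

lemma gauss_lintegral_eq {n : ℕ} {τ : ℝ} (hτ : 0 < τ) {g : (Fin n → ℂ) → ℝ}
    (hg : Continuous g) (hgnn : ∀ z, 0 ≤ g z)
    (hint : Integrable (fun z : Fin n → ℂ =>
      ((τ / Real.pi) ^ n * Real.exp (-τ * nsq z)) * g z)) :
    ∫⁻ z, ENNReal.ofReal (g z) ∂gaussMeasure n τ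
      = ENNReal.ofReal (∫ z, ((τ / Real.pi) ^ n * Real.exp (-τ * nsq z)) * g z) := by
  rw [gaussMeasure, lintegral_withDensity_eq_lintegral_mul volume
    (f := fun z : Fin n → ℂ => ENNReal.ofReal ((τ / Real.pi) ^ n * Real.exp (-τ * nsq z)))
    (g := fun z : Fin n → ℂ => ENNReal.ofReal (g z))
    ((gaussDens_measurable τ).ennreal_ofReal) (hg.measurable.ennreal_ofReal)]
  simp only [Pi.mul_apply]
  have : ∀ z : Fin n → ℂ,
      ENNReal.ofReal ((τ / Real.pi) ^ n * Real.exp (-τ * nsq z)) * ENNReal.ofReal (g z)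
        = ENNReal.ofReal (((τ / Real.pi) ^ n * Real.exp (-τ * nsq z)) * g z) :=
    fun z => (ENNReal.ofReal_mul (gaussDens_nonneg hτ z)).symm
  calc ∫⁻ z, (ENNReal.ofReal ((τ / Real.pi) ^ n * Real.exp (-τ * nsq z))
          * ENNReal.ofReal (g z)) ∂volume
      = ∫⁻ z, ENNReal.ofReal (((τ / Real.pi) ^ n * Real.exp (-τ * nsq z)) * g z) ∂volume := by
        simp_rw [this]
    _ = ENNReal.ofReal (∫ z, ((τ / Real.pi) ^ n * Real.exp (-τ * nsq z)) * g z) := by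
        rw [← ofReal_integral_eq_lintegral_ofReal hint]
        filter_upwards with z
        exact mul_nonneg (gaussDens_nonneg hτ z) (hgnn z)

lemma growth_le {K1 K2 u v : ℝ} (hK1 : 0 < K1)
    (h : ∀ R : ℝ, 0 ≤ R → K1 * Real.exp (u * R) ≤ K2 * Real.exp (v * R)) : u ≤ v := by
  by_contra hub
  push_neg at hub
  have hK1K2 : K1 ≤ K2 := by
    have h0 := h 0 le_rfl
    simpa using h0
  have hK2 : 0 < K2 := lt_of_lt_of_le hK1 hK1K2
  have hd : 0 < u - v := by linarith
  set D := Real.log (K2 / K1) with hD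
  have hD0 : 0 ≤ D := Real.log_nonneg ((one_le_div hK1).mpr hK1K2)
  have hR0 : 0 ≤ (D + 1) / (u - v) := by positivity
  have hineq := h _ hR0
  have h1 : Real.exp ((u - v) * ((D + 1) / (u - v))) ≤ K2 / K1 := by
    rw [sub_mul, Real.exp_sub, div_le_div_iff₀ (Real.exp_pos _) hK1]
    nlinarith [hineq]
  rw [← Real.exp_log (div_pos hK2 hK1), ← hD] at h1
  have h2 : (u - v) * ((D + 1) / (u - v)) ≤ D := Real.exp_le_exp.mp h1
  have h3 : (u - v) * ((D + 1) / (u - v)) = D + 1 := by field_simp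
  linarith


lemma key_ineq (n : ℕ) (p t s x C : ℝ) (hp1 : 1 < p) (ht : 0 < t) (hs : 0 < s)
    (hC : 0 ≤ C) (hSB : SBounded n t s p C) (hxt : x < t) (hpxs : p * x < s)
    (a : Fin n → ℂ) :
    ((t/(t-x))^n) ^ p * Real.exp (((t/(t-x))*p)^2 * nsq a / (4*s))
      ≤ C ^ p * ((s/(s-p*x))^n * Real.exp (p^2 * nsq a / (4*(s-p*x)))) := by
  have hp0 : 0 < p := by linarith
  have hmt : 0 < t - x := by linarith
  have hms : 0 < s - p * x := by linarith
  have hπ : 0 < Real.pi := Real.pi_pos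
  set θ : ℝ := t / (t - x) with hθdef
  have hθ : 0 < θ := div_pos ht hmt
  set f : (Fin n → ℂ) → ℂ :=
    fun w => Complex.exp ((x : ℂ) * ((nsq w : ℝ) : ℂ) + herm w a) with hfdef
  have hfc : Continuous f := by
    rw [hfdef]
    exact Complex.continuous_exp.comp
      ((continuous_const.mul (Complex.continuous_ofReal.comp continuous_nsq)).add
        (continuous_herm_fst a))
  have habsf : ∀ z, ‖f z‖ ^ p
      = Real.exp (p * (herm z a).re + (p * x) * nsq z) := by
    intro z
    rw [hfdef]
    simp only
    rw [Complex.norm_exp, ← Real.exp_mul]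
    congr 1
    simp only [Complex.add_re, Complex.re_ofReal_mul, Complex.ofReal_re]
    ring
  -- RHS computation
  set g2 : (Fin n → ℂ) → ℝ :=
    fun z => Real.exp (p * (herm z a).re + (p * x) * nsq z) with hg2
  have hg2c : Continuous g2 := by
    rw [hg2]
    exact Real.continuous_exp.comp
      ((continuous_const.mul (Complex.continuous_re.comp (continuous_herm_fst a))).add
        (continuous_const.mul continuous_nsq))
  have hdg2 : ∀ z, ((s / Real.pi) ^ n * Real.exp (-s * nsq z)) * g2 z
      = (s / Real.pi) ^ n * Real.exp (p * (herm z a).re - (s - p * x) * nsq z) := by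
    intro z
    rw [hg2, mul_assoc, ← Real.exp_add]
    congr 2
    ring
  have hint2 : Integrable (fun z : Fin n → ℂ =>
      ((s / Real.pi) ^ n * Real.exp (-s * nsq z)) * g2 z) := by
    simp_rw [hdg2]
    exact (gaussR_integrable hms p a).const_mul _
  have hfrac2 : (s / Real.pi) * (Real.pi / (s - p * x)) = s / (s - p * x) := by
    field_simp
  have hRHS : ∫⁻ z, ENNReal.ofReal (‖f z‖ ^ p) ∂gaussMeasure n s
      = ENNReal.ofReal ((s / (s - p * x)) ^ n
          * Real.exp (p ^ 2 * nsq a / (4 * (s - p * x)))) := by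
    have h1 : ∀ z : Fin n → ℂ,
        ENNReal.ofReal (‖f z‖ ^ p) = ENNReal.ofReal (g2 z) := fun z => by
      rw [habsf z, hg2]
    simp_rw [h1]
    rw [gauss_lintegral_eq hs hg2c (fun z => (Real.exp_pos _).le) hint2]
    congr 1
    calc ∫ z : Fin n → ℂ, ((s / Real.pi) ^ n * Real.exp (-s * nsq z)) * g2 z
        = ∫ z : Fin n → ℂ,
            (s / Real.pi) ^ n * Real.exp (p * (herm z a).re - (s - p * x) * nsq z) := by
          simp_rw [hdg2]
      _ = (s / Real.pi) ^ n
            * ∫ z : Fin n → ℂ, Real.exp (p * (herm z a).re - (s - p * x) * nsq z) :=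
          integral_const_mul _ _
      _ = (s / Real.pi) ^ n * ((Real.pi / (s - p * x)) ^ n
            * Real.exp (p ^ 2 * nsq a / (4 * (s - p * x)))) := by
          rw [gaussR_integral hms p a]
      _ = (s / (s - p * x)) ^ n * Real.exp (p ^ 2 * nsq a / (4 * (s - p * x))) := by
          rw [← mul_assoc, ← mul_pow, hfrac2]
  -- Memℒp
  have hpne0 : (ENNReal.ofReal p) ≠ 0 := by
    simp only [ne_eq, ENNReal.ofReal_eq_zero, not_le]
    linarith
  have hmem : MemLp f (ENNReal.ofReal p) (gaussMeasure n s) := by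
    refine ⟨hfc.aestronglyMeasurable, ?_⟩
    rw [eLpNorm_eq_lintegral_rpow_enorm_toReal hpne0 ENNReal.ofReal_ne_top,
      ENNReal.toReal_ofReal hp0.le]
    have h2 : ∀ z : Fin n → ℂ,
        ‖f z‖ₑ ^ p = ENNReal.ofReal (‖f z‖ ^ p) := by
      intro z
      rw [← ofReal_norm_eq_enorm,
        ENNReal.ofReal_rpow_of_nonneg (norm_nonneg _) hp0.le]
    simp_rw [h2]
    rw [hRHS]
    exact ENNReal.rpow_lt_top_of_nonneg (by positivity) ENNReal.ofReal_ne_top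
  obtain ⟨-, hineq⟩ := hSB f hmem
  -- compute S_t f
  have hπc : ((Real.pi : ℝ) : ℂ) ≠ 0 := Complex.ofReal_ne_zero.mpr (ne_of_gt hπ)
  have htxc : (((t - x : ℝ)) : ℂ) ≠ 0 := Complex.ofReal_ne_zero.mpr (ne_of_gt hmt)
  have hS : ∀ z : Fin n → ℂ,
      (∫ w, Complex.exp ((t : ℂ) * herm z w) * f w ∂gaussMeasure n t)
        = ((θ : ℝ) : ℂ) ^ n * Complex.exp (((θ : ℝ) : ℂ) * herm z a) := by
    intro z
    rw [gauss_integral_eq ht]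
    have hpt : ∀ w : Fin n → ℂ,
        ((t / Real.pi) ^ n * Real.exp (-t * nsq w)) • (Complex.exp ((t:ℂ) * herm z w) * f w)
          = ((t / Real.pi) ^ n : ℝ) • Complex.exp
              (∑ i, ((t:ℂ) * z i * (starRingEnd ℂ) (w i) + (starRingEnd ℂ) (a i) * w i)
                - ((t - x : ℝ) : ℂ) * ((nsq w : ℝ) : ℂ)) := by
      intro w
      rw [mul_smul]
      congr 1
      rw [hfdef]
      simp only
      rw [Complex.real_smul, Complex.ofReal_exp, ← Complex.exp_add, ← Complex.exp_add]
      congr 1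
      calc ((-t * nsq w : ℝ) : ℂ) + ((t:ℂ) * herm z w + ((x : ℂ) * ((nsq w : ℝ) : ℂ) + herm w a))
          = ((t:ℂ) * herm z w + herm w a) - ((t - x : ℝ) : ℂ) * ((nsq w : ℝ) : ℂ) := by
            push_cast
            ring
        _ = (∑ i, ((t:ℂ) * z i * (starRingEnd ℂ) (w i) + (starRingEnd ℂ) (a i) * w i))
              - ((t - x : ℝ) : ℂ) * ((nsq w : ℝ) : ℂ) := by
            congr 1
            rw [herm, herm, Finset.mul_sum, ← Finset.sum_add_distrib]
            exact Finset.sum_congr rfl fun i _ => by ring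
    simp_rw [hpt]
    rw [integral_smul]
    rw [gaussn_integral hmt (fun i => (t:ℂ) * z i) (fun i => (starRingEnd ℂ) (a i))]
    have hsum : (∑ i, (t:ℂ) * z i * (starRingEnd ℂ) (a i)) = (t:ℂ) * herm z a := by
      rw [herm, Finset.mul_sum]
      exact Finset.sum_congr rfl fun i _ => by ring
    rw [hsum, Complex.real_smul]
    have hdiv : ((t:ℂ) * herm z a) / (((t - x : ℝ)) : ℂ) = ((θ : ℝ) : ℂ) * herm z a := by
      rw [hθdef]
      push_cast
      field_simp
    rw [hdiv, ← mul_assoc]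
    congr 1
    have h1 : ((t : ℂ) - (x : ℂ)) ≠ 0 := by
      intro hcon
      apply htxc
      push_cast
      exact hcon
    rw [hθdef]
    push_cast
    field_simp
    rw [← mul_pow]
    congr 1
    field_simp
  -- LHS computation
  have habsS : ∀ z : Fin n → ℂ,
      ‖((θ : ℝ) : ℂ) ^ n * Complex.exp (((θ : ℝ) : ℂ) * herm z a)‖ ^ p
        = (θ ^ n) ^ p * Real.exp ((θ * p) * (herm z a).re) := by
    intro z
    rw [norm_mul, norm_pow, Complex.norm_real, Real.norm_eq_abs, abs_of_pos hθ, Complex.norm_exp,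
      Complex.re_ofReal_mul]
    rw [Real.mul_rpow (by positivity) (Real.exp_pos _).le, ← Real.exp_mul]
    rw [show θ * (herm z a).re * p = (θ * p) * (herm z a).re from by ring]
  have hg1c : Continuous (fun z : Fin n → ℂ =>
      (θ ^ n) ^ p * Real.exp ((θ * p) * (herm z a).re)) :=
    continuous_const.mul (Real.continuous_exp.comp
      (continuous_const.mul (Complex.continuous_re.comp (continuous_herm_fst a))))
  have hdg1 : ∀ z : Fin n → ℂ, ((s / Real.pi) ^ n * Real.exp (-s * nsq z))
        * ((θ ^ n) ^ p * Real.exp ((θ * p) * (herm z a).re))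
      = ((s / Real.pi) ^ n * (θ ^ n) ^ p)
          * Real.exp ((θ * p) * (herm z a).re - s * nsq z) := by
    intro z
    calc ((s / Real.pi) ^ n * Real.exp (-s * nsq z))
          * ((θ ^ n) ^ p * Real.exp ((θ * p) * (herm z a).re))
        = ((s / Real.pi) ^ n * (θ ^ n) ^ p)
            * (Real.exp (-s * nsq z) * Real.exp ((θ * p) * (herm z a).re)) := by ring
      _ = ((s / Real.pi) ^ n * (θ ^ n) ^ p)
            * Real.exp ((θ * p) * (herm z a).re - s * nsq z) := by
          rw [← Real.exp_add]
          congr 1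
          ring
  have hint1 : Integrable (fun z : Fin n → ℂ =>
      ((s / Real.pi) ^ n * Real.exp (-s * nsq z))
        * ((θ ^ n) ^ p * Real.exp ((θ * p) * (herm z a).re))) := by
    simp_rw [hdg1]
    exact (gaussR_integrable hs (θ * p) a).const_mul _
  have hfrac1 : (s / Real.pi) * (Real.pi / s) = 1 := by
    field_simp
  have hLHS : ∫⁻ z, ENNReal.ofReal
        ((θ ^ n) ^ p * Real.exp ((θ * p) * (herm z a).re)) ∂gaussMeasure n s
      = ENNReal.ofReal ((θ ^ n) ^ p * Real.exp ((θ * p) ^ 2 * nsq a / (4 * s))) := by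
    rw [gauss_lintegral_eq hs hg1c (fun z => by positivity) hint1]
    congr 1
    calc ∫ z : Fin n → ℂ, ((s / Real.pi) ^ n * Real.exp (-s * nsq z))
          * ((θ ^ n) ^ p * Real.exp ((θ * p) * (herm z a).re))
        = ∫ z : Fin n → ℂ, ((s / Real.pi) ^ n * (θ ^ n) ^ p)
            * Real.exp ((θ * p) * (herm z a).re - s * nsq z) := by
          simp_rw [hdg1]
      _ = ((s / Real.pi) ^ n * (θ ^ n) ^ p)
            * ∫ z : Fin n → ℂ, Real.exp ((θ * p) * (herm z a).re - s * nsq z) :=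
          integral_const_mul _ _
      _ = ((s / Real.pi) ^ n * (θ ^ n) ^ p)
            * ((Real.pi / s) ^ n * Real.exp ((θ * p) ^ 2 * nsq a / (4 * s))) := by
          rw [gaussR_integral hs (θ * p) a]
      _ = ((s / Real.pi) ^ n * (Real.pi / s) ^ n)
            * ((θ ^ n) ^ p * Real.exp ((θ * p) ^ 2 * nsq a / (4 * s))) := by ring
      _ = (θ ^ n) ^ p * Real.exp ((θ * p) ^ 2 * nsq a / (4 * s)) := by
          rw [← mul_pow, hfrac1, one_pow, one_mul]
  -- assemble
  simp_rw [hS, habsS] at hineq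
  rw [hLHS, hRHS, ← ENNReal.ofReal_mul (Real.rpow_nonneg hC p)] at hineq
  have hrhs_nn : 0 ≤ C ^ p * ((s / (s - p * x)) ^ n
      * Real.exp (p ^ 2 * nsq a / (4 * (s - p * x)))) := by
    apply mul_nonneg (Real.rpow_nonneg hC p)
    positivity
  exact (ENNReal.ofReal_le_ofReal_iff hrhs_nn).mp hineq

theorem stmt6 (n : ℕ) (hn : 0 < n) (p t s : ℝ) (hp1 : 1 < p) (hp2 : p ≤ 2)
    (ht : 0 < t) (hs : 0 < s)
    (h : ∃ C : ℝ, 0 ≤ C ∧ SBounded n t s p C) :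
    p * t = 2 * s := by
  by_contra hne
  obtain ⟨C, hC, hSB⟩ := h
  have hp0 : 0 < p := by linarith
  set x : ℝ := t * (2 * s - p * t) / (2 * s) with hxdef
  have hx2s : x * (2 * s) = t * (2 * s - p * t) := by
    rw [hxdef]
    field_simp
  have hxt : x < t := by nlinarith [hx2s, mul_pos (mul_pos hp0 ht) ht, hs]
  have hpxs : p * x < s := by nlinarith [hx2s, sq_nonneg (s - p * t), mul_pos hs hs]
  have hmt : 0 < t - x := by linarith
  have hms : 0 < s - p * x := by linarith
  have key := fun a => key_ineq n p t s x C hp1 ht hs hC hSB hxt hpxs a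
  have hn' : (n : ℝ) ≠ 0 := Nat.cast_ne_zero.mpr hn.ne'
  have key' : ∀ R : ℝ, 0 ≤ R →
      ((t/(t-x))^n) ^ p * Real.exp ((((t/(t-x))*p)^2 / (4*s)) * R)
        ≤ (C ^ p * (s/(s-p*x))^n) * Real.exp ((p^2 / (4*(s-p*x))) * R) := by
    intro R hR
    have hk := key (fun _ : Fin n => ((Real.sqrt (R / n) : ℝ) : ℂ))
    have hnsq : nsq (fun _ : Fin n => ((Real.sqrt (R / n) : ℝ) : ℂ)) = R := by
      rw [nsq]
      simp only [Complex.normSq_ofReal]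
      rw [Finset.sum_const, Finset.card_univ, Fintype.card_fin, nsmul_eq_mul,
        Real.mul_self_sqrt (by positivity)]
      field_simp
    rw [hnsq] at hk
    calc ((t/(t-x))^n) ^ p * Real.exp ((((t/(t-x))*p)^2 / (4*s)) * R)
        = ((t/(t-x))^n) ^ p * Real.exp (((t/(t-x))*p)^2 * R / (4*s)) := by
          rw [show (((t/(t-x))*p)^2 / (4*s)) * R = ((t/(t-x))*p)^2 * R / (4*s) from by ring]
      _ ≤ C ^ p * ((s/(s-p*x))^n * Real.exp (p^2 * R / (4*(s-p*x)))) := hk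
      _ = (C ^ p * (s/(s-p*x))^n) * Real.exp ((p^2 / (4*(s-p*x))) * R) := by
          rw [show (p^2 / (4*(s-p*x))) * R = p^2 * R / (4*(s-p*x)) from by ring]
          ring
  have hK1pos : 0 < ((t/(t-x))^n) ^ p :=
    Real.rpow_pos_of_pos (pow_pos (div_pos ht hmt) n) p
  have huv : ((t/(t-x))*p)^2 / (4*s) ≤ p^2 / (4*(s-p*x)) := growth_le hK1pos key'
  -- clear denominators
  have h4s : (0:ℝ) < 4 * s := by linarith
  have h4ms : (0:ℝ) < 4 * (s - p * x) := by linarith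
  rw [div_le_div_iff₀ h4s h4ms] at huv
  -- huv : ((t/(t-x))*p)^2 * (4*(s-p*x)) ≤ p^2 * (4*s)
  have htx2 : (t/(t-x))^2 * (t-x)^2 = t^2 := by
    field_simp
  have hfin : p^2 * t^2 * (4*(s-p*x)) ≤ p^2 * (4*s) * (t-x)^2 := by
    have hmul := mul_le_mul_of_nonneg_right huv (sq_nonneg (t - x))
    have e3 : (t/(t-x)*p)^2 * (4*(s-p*x)) * (t-x)^2 = p^2 * t^2 * (4*(s-p*x)) := by
      linear_combination (p^2*(4*(s-p*x))) * htx2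
    have e4 : p^2 * (4*s) * (t-x)^2 = p ^ 2 * (4 * s) * (t - x) ^ 2 := rfl
    nlinarith [hmul, e3]
  have e1 : 2*s*(s - p*x) = s^2 + (s - p*t)^2 := by linear_combination (-p) * hx2s
  have e2 : 2*s*(t - x) = p*t^2 := by linear_combination (-1) * hx2s
  have hfin2 : s^2 * (p^2 * t^2 * (4*(s-p*x))) ≤ s^2 * (p^2 * (4*s) * (t-x)^2) :=
    mul_le_mul_of_nonneg_left hfin (sq_nonneg s)
  have e1' : s^2 * (p^2 * t^2 * (4*(s-p*x))) = 2*s*p^2*t^2*(s^2 + (s-p*t)^2) := by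
    linear_combination (2*s*p^2*t^2) * e1
  have e2' : s^2 * (p^2 * (4*s) * (t-x)^2) = s*p^4*t^4 := by
    linear_combination (p^2*s*(2*s*(t-x)) + p^2*s*(p*t^2)) * e2
  have hfin3 : 2*s*p^2*t^2*(s^2 + (s-p*t)^2) ≤ s*p^4*t^4 := by
    linarith [hfin2, e1'.symm, e2'.symm]
  have hne' : 2*s - p*t ≠ 0 := fun hh => hne (by linarith)
  have hsqpos : 0 < (2*s - p*t)^2 :=
    lt_of_le_of_ne (sq_nonneg _) (Ne.symm (pow_ne_zero 2 hne'))
  have hid : 2*s*p^2*t^2*(s^2 + (s-p*t)^2) - s*p^4*t^4 = s*p^2*t^2*(2*s - p*t)^2 := by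
    ring
  nlinarith [hfin3, hid, hsqpos, mul_pos (mul_pos hs (mul_pos hp0 hp0)) (mul_pos ht ht),
    mul_pos (mul_pos (mul_pos hs (mul_pos hp0 hp0)) (mul_pos ht ht)) hsqpos]
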